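/- Let ε > 0, λ > 0, and draw m i.i.d. samples from each ρ_{x_j}, j = 1,…,d, independently. Then for every f ∈ H, with probability at least 1 − 2d · exp( − m ε² / (2 ‖k‖_∞) ), the regularized Monte Carlo approximant satisfies ‖(\hat{K}^{MC}_λ − \hat{K}_λ) f‖_∞ ≤ ε · ‖k‖_∞^{1/2} · √(d/λ) · ‖f‖_H. -/

import Mathlib

open MeasureTheory ProbabilityTheory Matrix
open scoped RealInnerProductSpace

noncomputable section

/-- The kernel matrix `K_X = (k(x_i,x_j))_{i,j}` built from the feature map `Φ`. -/
def kerMatrix {n : ℕ} {H : Type*} [NormedAddCommGroup H] [InnerProductSpace ℝ H]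
    (Φ : EuclideanSpace ℝ (Fin n) → H) (d : ℕ) (x : Fin d → EuclideanSpace ℝ (Fin n)) :
    Matrix (Fin d) (Fin d) ℝ :=
  Matrix.of fun i j => ⟪Φ (x i), Φ (x j)⟫

/-- The kernel vector `k_X(z) = (k(x_1,z),…,k(x_d,z))ᵀ`. -/
def kerVec {n : ℕ} {H : Type*} [NormedAddCommGroup H] [InnerProductSpace ℝ H]
    (Φ : EuclideanSpace ℝ (Fin n) → H) (d : ℕ) (x : Fin d → EuclideanSpace ℝ (Fin n))
    (z : EuclideanSpace ℝ (Fin n)) : Fin d → ℝ :=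
  fun i => ⟪Φ (x i), Φ z⟫

/-- The exact propagation matrix `(K_{X,Y})_{ij} = ∫_Ω k(x_i,y) dρ_{x_j}(y)`. -/
def propMatrix {n : ℕ} {H : Type*} [NormedAddCommGroup H] [InnerProductSpace ℝ H]
    (Ω : Set (EuclideanSpace ℝ (Fin n)))
    (ρ : ProbabilityTheory.Kernel (EuclideanSpace ℝ (Fin n)) (EuclideanSpace ℝ (Fin n)))
    (Φ : EuclideanSpace ℝ (Fin n) → H) (d : ℕ) (x : Fin d → EuclideanSpace ℝ (Fin n)) :
    Matrix (Fin d) (Fin d) ℝ :=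
  Matrix.of fun i j => ∫ y in Ω, ⟪Φ (x i), Φ y⟫ ∂(ρ (x j))

/-- The Monte Carlo propagation matrix
`(K^{MC}_{X,Y})_{ij} = (1/m) ∑_{l=1}^m k(x_i, y_{l,j})` at the sample point `θ`. -/
def propMatrixMC {n : ℕ} {H : Type*} [NormedAddCommGroup H] [InnerProductSpace ℝ H]
    (Φ : EuclideanSpace ℝ (Fin n) → H) (d : ℕ) (x : Fin d → EuclideanSpace ℝ (Fin n))
    (m : ℕ) {Θ : Type*} (Y : Fin m × Fin d → Θ → EuclideanSpace ℝ (Fin n)) (θ : Θ) :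
    Matrix (Fin d) (Fin d) ℝ :=
  Matrix.of fun i j => (1 / (m : ℝ)) * ∑ l : Fin m, ⟪Φ (x i), Φ (Y (l, j) θ)⟫

section AuxLemmas
open Real

lemma hoeffding_core (p v : ℝ) (h0 : 0 ≤ p) (h1 : p ≤ 1) :
    (1 - p) * Real.exp (-(p * v)) + p * Real.exp ((1 - p) * v) ≤ Real.exp (v ^ 2 / 8) := by
  have hexp1 : (1 : ℝ) ≤ Real.exp (v ^ 2 / 8) := by
    rw [← Real.exp_zero]; exact Real.exp_le_exp.2 (by positivity)
  rcases eq_or_lt_of_le h0 with h0' | h0'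
  · simp only [← h0', sub_zero, zero_mul, neg_zero, Real.exp_zero, mul_one, zero_add, one_mul]
    simpa using hexp1
  rcases eq_or_lt_of_le h1 with h1' | h1'
  · simp only [h1', sub_self, zero_mul, add_zero, one_mul, Real.exp_zero, mul_one, zero_add]
    simpa [h1'] using hexp1
  -- main case 0 < p < 1
  set D : ℝ → ℝ := fun v => 1 - p + p * Real.exp v with hDdef
  have hD : ∀ w, 0 < D w := fun w => by
    have := Real.exp_pos w; simp only [hDdef]; nlinarith
  set ψ : ℝ → ℝ := fun v => v ^ 2 / 8 + p * v - Real.log (1 - p + p * Real.exp v) with hψdef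
  set ψ' : ℝ → ℝ := fun v => v / 4 + p - p * Real.exp v / (1 - p + p * Real.exp v) with hψ'def
  have hDderiv : ∀ w, HasDerivAt (fun v => 1 - p + p * Real.exp v) (p * Real.exp w) w :=
    fun w => ((Real.hasDerivAt_exp w).const_mul p).const_add (1 - p)
  have hψderiv : ∀ w, HasDerivAt ψ (ψ' w) w := by
    intro w
    have h1' : HasDerivAt (fun v : ℝ => v ^ 2 / 8 + p * v) (w / 4 + p) w := by
      have := ((hasDerivAt_pow 2 w).div_const 8).add ((hasDerivAt_id w).const_mul p)
      exact this.congr_deriv (by push_cast; ring)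
    have hlog : HasDerivAt (fun v => Real.log (1 - p + p * Real.exp v))
        (p * Real.exp w / (1 - p + p * Real.exp w)) w :=
      (hDderiv w).log (hD w).ne'
    exact h1'.sub hlog
  have hψ'deriv : ∀ w, HasDerivAt ψ'
      (1 / 4 - (p * Real.exp w * (1 - p + p * Real.exp w) -
        p * Real.exp w * (p * Real.exp w)) / (1 - p + p * Real.exp w) ^ 2) w := by
    intro w
    have h1' : HasDerivAt (fun v : ℝ => v / 4 + p) (1 / 4) w := by
      simpa using ((hasDerivAt_id w).div_const 4).add_const p
    have h2' : HasDerivAt (fun v => p * Real.exp v / (1 - p + p * Real.exp v))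
        ((p * Real.exp w * (1 - p + p * Real.exp w) -
          p * Real.exp w * (p * Real.exp w)) / (1 - p + p * Real.exp w) ^ 2) w :=
      ((Real.hasDerivAt_exp w).const_mul p).div (hDderiv w) (hD w).ne'
    exact h1'.sub h2'
  have hψ''nonneg : ∀ w, 0 ≤ 1 / 4 - (p * Real.exp w * (1 - p + p * Real.exp w) -
      p * Real.exp w * (p * Real.exp w)) / (1 - p + p * Real.exp w) ^ 2 := by
    intro w
    rw [sub_nonneg, div_le_iff₀ (pow_pos (hD w) 2)]
    nlinarith [sq_nonneg (1 - p - p * Real.exp w), Real.exp_pos w]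
  have hψ'mono : Monotone ψ' :=
    monotone_of_deriv_nonneg (fun w => (hψ'deriv w).differentiableAt)
      (fun w => by rw [(hψ'deriv w).deriv]; exact hψ''nonneg w)
  have hψ'0 : ψ' 0 = 0 := by
    simp only [hψ'def, Real.exp_zero, mul_one]
    have : (1 : ℝ) - p + p = 1 := by ring
    rw [this]; simp
  have hψcont : Continuous ψ := by
    have : Differentiable ℝ ψ := fun w => (hψderiv w).differentiableAt
    exact this.continuous
  have hψ0 : ψ 0 = 0 := by
    simp only [hψdef, Real.exp_zero, mul_one]
    have : (1 : ℝ) - p + p = 1 := by ring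
    rw [this]; simp
  have hψnonneg : ∀ w, 0 ≤ ψ w := by
    intro w
    rcases le_total 0 w with hw | hw
    · have hmono : MonotoneOn ψ (Set.Ici 0) := by
        apply monotoneOn_of_deriv_nonneg (convex_Ici 0) hψcont.continuousOn
          (fun x _ => (hψderiv x).differentiableAt.differentiableWithinAt)
        intro x hx
        rw [interior_Ici] at hx
        rw [(hψderiv x).deriv]
        calc (0:ℝ) = ψ' 0 := hψ'0.symm
          _ ≤ ψ' x := hψ'mono (le_of_lt hx)
      have := hmono Set.self_mem_Ici (Set.mem_Ici.2 hw) hw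
      rwa [hψ0] at this
    · have hmono : AntitoneOn ψ (Set.Iic 0) := by
        apply antitoneOn_of_deriv_nonpos (convex_Iic 0) hψcont.continuousOn
          (fun x _ => (hψderiv x).differentiableAt.differentiableWithinAt)
        intro x hx
        rw [interior_Iic] at hx
        rw [(hψderiv x).deriv]
        calc ψ' x ≤ ψ' 0 := hψ'mono (le_of_lt hx)
          _ = 0 := hψ'0
      have := hmono (Set.mem_Iic.2 hw) Set.self_mem_Iic hw
      rwa [hψ0] at this
  have hkey : Real.log (1 - p + p * Real.exp v) - p * v ≤ v ^ 2 / 8 := by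
    have := hψnonneg v; simp only [hψdef] at this; linarith
  have hLHS : (1 - p) * Real.exp (-(p * v)) + p * Real.exp ((1 - p) * v)
      = Real.exp (Real.log (1 - p + p * Real.exp v) - p * v) := by
    have e1 : Real.exp ((1 - p) * v) = Real.exp (-(p * v)) * Real.exp v := by
      rw [← Real.exp_add]; ring_nf
    rw [Real.exp_sub, Real.exp_log (hD v), e1, Real.exp_neg]
    ring
  rw [hLHS]
  exact Real.exp_le_exp.2 hkey

lemma mgf_le_of_mem_Icc {Θ : Type*} [MeasurableSpace Θ] {P : Measure Θ} [IsProbabilityMeasure P]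
    {X : Θ → ℝ} {a b : ℝ} (s : ℝ) (hmeas : AEStronglyMeasurable X P)
    (hbdd : ∀ᵐ θ ∂P, X θ ∈ Set.Icc a b) (hcent : ∫ θ, X θ ∂P = 0) :
    mgf X P s ≤ Real.exp (s ^ 2 * (b - a) ^ 2 / 8) := by
  have hexp1 : (1 : ℝ) ≤ Real.exp (s ^ 2 * (b - a) ^ 2 / 8) := by
    rw [← Real.exp_zero]; exact Real.exp_le_exp.2 (by positivity)
  have hXint : Integrable X P := by
    refine Integrable.mono' (integrable_const (max |a| |b|)) hmeas ?_
    filter_upwards [hbdd] with θ hθ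
    rcases hθ with ⟨h1, h2⟩
    rw [Real.norm_eq_abs, abs_le]
    constructor
    · calc -(max |a| |b|) ≤ -|a| := by simp
        _ ≤ a := neg_abs_le a
        _ ≤ X θ := h1
    · calc X θ ≤ b := h2
        _ ≤ |b| := le_abs_self b
        _ ≤ max |a| |b| := le_max_right _ _
  have ha0 : a ≤ 0 := by
    have : ∫ _θ, a ∂P ≤ ∫ θ, X θ ∂P :=
      integral_mono_ae (integrable_const a) hXint (by filter_upwards [hbdd] with θ hθ using hθ.1)
    simpa [hcent] using this
  have hb0 : 0 ≤ b := by
    have : ∫ θ, X θ ∂P ≤ ∫ _θ, b ∂P :=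
      integral_mono_ae hXint (integrable_const b) (by filter_upwards [hbdd] with θ hθ using hθ.2)
    simpa [hcent] using this
  rcases lt_or_ge a b with hab | hab
  swap
  · -- a = b = 0
    have ha : a = 0 := le_antisymm ha0 (hb0.trans hab)
    have hb : b = 0 := le_antisymm (hab.trans ha0) hb0
    have hX0 : ∀ᵐ θ ∂P, X θ = 0 := by
      filter_upwards [hbdd] with θ hθ
      rw [ha, hb] at hθ; exact le_antisymm hθ.2 hθ.1
    have : mgf X P s = 1 := by
      unfold mgf
      rw [integral_congr_ae (g := fun _ => (1:ℝ)) ?_, integral_const]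
      · simp
      · filter_upwards [hX0] with θ hθ; rw [hθ]; simp
    rw [this]; exact hexp1
  -- main case a < b
  have hba : 0 < b - a := sub_pos.2 hab
  set α := Real.exp (s * a) with hα
  set β := Real.exp (s * b) with hβ
  have hptwise : ∀ᵐ θ ∂P, Real.exp (s * X θ) ≤
      (b * α - a * β) / (b - a) + ((β - α) / (b - a)) * X θ := by
    filter_upwards [hbdd] with θ hθ
    obtain ⟨h1, h2⟩ := hθ
    set x := X θ
    have key := convexOn_exp.2 (Set.mem_univ (s * a)) (Set.mem_univ (s * b))
      (div_nonneg (by linarith) hba.le)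
      (div_nonneg (by linarith) hba.le)
      (by field_simp; ring : (b - x) / (b - a) + (x - a) / (b - a) = 1)
    simp only [smul_eq_mul] at key
    have harg : (b - x) / (b - a) * (s * a) + (x - a) / (b - a) * (s * b) = s * x := by
      field_simp; ring
    rw [harg] at key
    calc Real.exp (s * x) ≤ (b - x) / (b - a) * α + (x - a) / (b - a) * β := key
      _ = (b * α - a * β) / (b - a) + ((β - α) / (b - a)) * x := by field_simp; ring
  have hintexp : Integrable (fun θ => Real.exp (s * X θ)) P := by
    refine Integrable.mono' (integrable_const (Real.exp (|s| * max |a| |b|)))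
      (Real.continuous_exp.comp_aestronglyMeasurable (hmeas.const_mul s))  ?_
    filter_upwards [hbdd] with θ hθ
    rw [Real.norm_eq_abs, abs_of_pos (Real.exp_pos _)]
    apply Real.exp_le_exp.2
    calc s * X θ ≤ |s * X θ| := le_abs_self _
      _ = |s| * |X θ| := abs_mul _ _
      _ ≤ |s| * max |a| |b| := by
          apply mul_le_mul_of_nonneg_left _ (abs_nonneg s)
          rw [abs_le]
          exact ⟨by nlinarith [hθ.1, neg_abs_le a, le_max_left |a| |b|],
            by nlinarith [hθ.2, le_abs_self b, le_max_right |a| |b|]⟩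
  have hmgf_le : mgf X P s ≤ (b * α - a * β) / (b - a) := by
    unfold mgf
    have h2int : Integrable (fun θ => (b * α - a * β) / (b - a) + ((β - α) / (b - a)) * X θ) P :=
      (integrable_const _).add (hXint.const_mul _)
    calc ∫ θ, Real.exp (s * X θ) ∂P
        ≤ ∫ θ, ((b * α - a * β) / (b - a) + ((β - α) / (b - a)) * X θ) ∂P :=
          integral_mono_ae hintexp h2int hptwise
      _ = (b * α - a * β) / (b - a) := by
          rw [integral_add (integrable_const _) (hXint.const_mul _), integral_const,
            integral_const_mul, hcent]
          simp
  set p := -a / (b - a) with hp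
  set v := s * (b - a) with hv
  have hp0 : 0 ≤ p := div_nonneg (by linarith) hba.le
  have hp1 : p ≤ 1 := by
    rw [hp, div_le_one hba]; linarith
  have hrw : (b * α - a * β) / (b - a) = (1 - p) * Real.exp (-(p * v)) + p * Real.exp ((1 - p) * v) := by
    have e1 : -(p * v) = s * a := by rw [hp, hv]; field_simp
    have e2 : (1 - p) * v = s * b := by rw [hp, hv]; field_simp; ring
    rw [e1, e2, hα, hβ, hp]
    field_simp
    ring
  have := hoeffding_core p v hp0 hp1
  calc mgf X P s ≤ (b * α - a * β) / (b - a) := hmgf_le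
    _ = (1 - p) * Real.exp (-(p * v)) + p * Real.exp ((1 - p) * v) := hrw
    _ ≤ Real.exp (v ^ 2 / 8) := this
    _ = Real.exp (s ^ 2 * (b - a) ^ 2 / 8) := by rw [hv]; ring_nf

lemma chernoff_sum {ι Θ : Type*} [MeasurableSpace Θ] {P : Measure Θ} [IsProbabilityMeasure P]
    (X : ι → Θ → ℝ) (hindep : iIndepFun X P)
    (hmeas : ∀ i, Measurable (X i)) (s : Finset ι) (c t : ℝ) (hc : 0 < c) (ht : 0 ≤ t)
    (hIcc : ∀ i ∈ s, ∃ a : ℝ, ∀ᵐ θ ∂P, X i θ ∈ Set.Icc a (a + 2 * c))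
    (hcent : ∀ i ∈ s, ∫ θ, X i θ ∂P = 0) :
    P {θ | (s.card : ℝ) * t ≤ ∑ i ∈ s, X i θ} ≤
      ENNReal.ofReal (Real.exp (-(s.card : ℝ) * t ^ 2 / (2 * c ^ 2))) := by
  set r : ℝ := t / c ^ 2 with hr
  have hr0 : 0 ≤ r := div_nonneg ht (by positivity)
  have hint : ∀ i ∈ s, Integrable (fun θ => Real.exp (r * X i θ)) P := by
    intro i hi
    obtain ⟨a, ha⟩ := hIcc i hi
    refine Integrable.mono' (integrable_const (Real.exp (|r| * (|a| + 2 * c))))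
      (Real.continuous_exp.comp_aestronglyMeasurable
        (((hmeas i).aestronglyMeasurable).const_mul r)) ?_
    filter_upwards [ha] with θ hθ
    rw [Real.norm_eq_abs, abs_of_pos (Real.exp_pos _)]
    apply Real.exp_le_exp.2
    calc r * X i θ ≤ |r * X i θ| := le_abs_self _
      _ = |r| * |X i θ| := abs_mul _ _
      _ ≤ |r| * (|a| + 2 * c) := by
          apply mul_le_mul_of_nonneg_left _ (abs_nonneg r)
          rw [abs_le]
          refine ⟨?_, ?_⟩
          · have := hθ.1; have := neg_abs_le a; linarith
          · have := hθ.2; have := le_abs_self a; linarith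
  have hsumint : Integrable (fun θ => Real.exp (r * (∑ i ∈ s, X i) θ)) P :=
    hindep.integrable_exp_mul_sum hmeas hint
  have key := measure_ge_le_exp_mul_mgf (μ := P) (X := ∑ i ∈ s, X i)
    ((s.card : ℝ) * t) hr0 hsumint
  have hmgf : mgf (∑ i ∈ s, X i) P r ≤ Real.exp ((s.card : ℝ) * (r ^ 2 * c ^ 2 / 2)) := by
    rw [hindep.mgf_sum hmeas s]
    calc ∏ i ∈ s, mgf (X i) P r ≤ ∏ i ∈ s, Real.exp (r ^ 2 * c ^ 2 / 2) := by
          apply Finset.prod_le_prod (fun i _ => mgf_nonneg)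
          intro i hi
          obtain ⟨a, ha⟩ := hIcc i hi
          have := mgf_le_of_mem_Icc (P := P) (X := X i) (a := a) (b := a + 2 * c) r
            (hmeas i).aestronglyMeasurable ha (hcent i hi)
          calc mgf (X i) P r ≤ Real.exp (r ^ 2 * (a + 2 * c - a) ^ 2 / 8) := this
            _ = Real.exp (r ^ 2 * c ^ 2 / 2) := by ring_nf
      _ = Real.exp ((s.card : ℝ) * (r ^ 2 * c ^ 2 / 2)) := by
          rw [Finset.prod_const, ← Real.exp_nat_mul]
  have hbound : Real.exp (-r * ((s.card : ℝ) * t)) * mgf (∑ i ∈ s, X i) P r ≤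
      Real.exp (-(s.card : ℝ) * t ^ 2 / (2 * c ^ 2)) := by
    calc Real.exp (-r * ((s.card : ℝ) * t)) * mgf (∑ i ∈ s, X i) P r
        ≤ Real.exp (-r * ((s.card : ℝ) * t)) * Real.exp ((s.card : ℝ) * (r ^ 2 * c ^ 2 / 2)) := by
          exact mul_le_mul_of_nonneg_left hmgf (le_of_lt (Real.exp_pos _))
      _ = Real.exp (-r * ((s.card : ℝ) * t) + (s.card : ℝ) * (r ^ 2 * c ^ 2 / 2)) := by
          rw [← Real.exp_add]
      _ = Real.exp (-(s.card : ℝ) * t ^ 2 / (2 * c ^ 2)) := by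
          congr 1
          rw [hr]
          field_simp
          ring
  rw [ENNReal.le_ofReal_iff_toReal_le (measure_ne_top P _) (le_of_lt (Real.exp_pos _))]
  have hseteq : {θ | (s.card : ℝ) * t ≤ ∑ i ∈ s, X i θ} = {θ | (s.card : ℝ) * t ≤ (∑ i ∈ s, X i) θ} := by
    ext θ; simp
  rw [hseteq]
  calc (P {θ | (s.card : ℝ) * t ≤ (∑ i ∈ s, X i) θ}).toReal
      ≤ Real.exp (-r * ((s.card : ℝ) * t)) * mgf (∑ i ∈ s, X i) P r := key
    _ ≤ _ := hbound

end AuxLemmas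

set_option maxHeartbeats 2000000 in
/-- (Regularized Monte Carlo error bound.) With `m` i.i.d. samples
from each `ρ_{x_j}` and regularization parameter `λ > 0`, for every `f ∈ H`, with
probability at least `1 − 2d·exp(−mε²/(2‖k‖_∞))`, the regularized Monte Carlo
approximant satisfies `‖(K̂^{MC}_λ − K̂_λ) f‖_∞ ≤ ε · ‖k‖_∞^{1/2} · √(d/λ) · ‖f‖_H`. -/
theorem kEDMD_regularized_monte_carlo_error_bound
    {n : ℕ} (hn : 1 ≤ n)
    (Ω : Set (EuclideanSpace ℝ (Fin n)))
    (hΩne : Ω.Nonempty) (hΩopen : IsOpen Ω) (hΩbdd : Bornology.IsBounded Ω)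
    (ρ : ProbabilityTheory.Kernel (EuclideanSpace ℝ (Fin n)) (EuclideanSpace ℝ (Fin n)))
    [IsMarkovKernel ρ] (hρΩ : ∀ x ∈ Ω, ρ x Ω = 1)
    {H : Type*} [NormedAddCommGroup H] [InnerProductSpace ℝ H] [CompleteSpace H]
    (ev : H →ₗ[ℝ] (EuclideanSpace ℝ (Fin n) → ℝ))
    (Φ : EuclideanSpace ℝ (Fin n) → H)
    (hrepr : ∀ (f : H), ∀ x ∈ Ω, ev f x = ⟪f, Φ x⟫)
    (hΦcont : ContinuousOn Φ Ω)
    (Mk : ℝ) (hMk : ∀ x ∈ Ω, ∀ y ∈ Ω, |⟪Φ x, Φ y⟫| ≤ Mk)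
    (d : ℕ) (hd : 1 ≤ d) (x : Fin d → EuclideanSpace ℝ (Fin n))
    (hxΩ : ∀ i, x i ∈ Ω) (hxinj : Function.Injective x)
    (hKXpos : (kerMatrix Φ d x).PosDef)
    -- the i.i.d. samples `y_{l,j} ∼ ρ_{x_j}`, independent across all indices
    (m : ℕ) (hm : 1 ≤ m)
    {Θ : Type*} [MeasurableSpace Θ] (P : Measure Θ) [IsProbabilityMeasure P]
    (Y : Fin m × Fin d → Θ → EuclideanSpace ℝ (Fin n))
    (hYmeas : ∀ p, Measurable (Y p))
    (hYindep : ProbabilityTheory.iIndepFun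
      Y P)
    (hYlaw : ∀ (l : Fin m) (j : Fin d), Measure.map (Y (l, j)) P = ρ (x j))
    (f : H)
    (ε : ℝ) (hε : 0 < ε)
    (lam : ℝ) (hlam : 0 < lam) :
    ENNReal.ofReal (1 - 2 * d * Real.exp (-(m : ℝ) * ε ^ 2 / (2 * Mk))) ≤
      P {θ : Θ | ∀ z ∈ Ω,
        |(fun j => ev f (x j)) ⬝ᵥ
            ((kerMatrix Φ d x + lam • (1 : Matrix (Fin d) (Fin d) ℝ))⁻¹ *ᵥ
              (propMatrixMC Φ d x m Y θ *ᵥ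
                ((kerMatrix Φ d x + lam • (1 : Matrix (Fin d) (Fin d) ℝ))⁻¹ *ᵥ
                  kerVec Φ d x z))) -
          (fun j => ev f (x j)) ⬝ᵥ
            ((kerMatrix Φ d x + lam • (1 : Matrix (Fin d) (Fin d) ℝ))⁻¹ *ᵥ
              (propMatrix Ω ρ Φ d x *ᵥ
                ((kerMatrix Φ d x + lam • (1 : Matrix (Fin d) (Fin d) ℝ))⁻¹ *ᵥ
                  kerVec Φ d x z)))| ≤
          ε * Real.sqrt Mk * Real.sqrt ((d : ℝ) / lam) * ‖f‖} := by
  classical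
  obtain ⟨x₀, hx₀⟩ := hΩne
  have hMk0 : 0 ≤ Mk := le_trans (abs_nonneg _) (hMk x₀ hx₀ x₀ hx₀)
  have hΩmeas : MeasurableSet Ω := hΩopen.measurableSet
  have hdot : ∀ (a b : Fin d → ℝ), a ⬝ᵥ b = ∑ i, a i * b i := fun _ _ => rfl
  set K := kerMatrix Φ d x with hK
  set B := K + lam • (1 : Matrix (Fin d) (Fin d) ℝ) with hB
  set A := B⁻¹ with hA
  set MC := propMatrixMC Φ d x m Y with hMC
  set EX := propMatrix Ω ρ Φ d x with hEX
  set fX : Fin d → ℝ := fun j => ev f (x j) with hfXdef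
  -- basic matrix facts
  have hKT : Kᵀ = K := by
    ext i j
    simp only [hK, kerMatrix, Matrix.transpose_apply, Matrix.of_apply]
    exact real_inner_comm _ _
  have hBT : Bᵀ = B := by
    rw [hB, Matrix.transpose_add, hKT, Matrix.transpose_smul, Matrix.transpose_one]
  have hBpd : B.PosDef := by
    exact hKXpos.add_posSemidef (Matrix.PosSemidef.one.smul hlam.le)
  have hBdet : IsUnit B.det := (Matrix.isUnit_iff_isUnit_det B).1 hBpd.isUnit
  have hBA : B * A = 1 := Matrix.mul_nonsing_inv B hBdet
  have hAT : Aᵀ = A := by rw [hA, Matrix.transpose_nonsing_inv, hBT]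
  have hfXval : ∀ j, fX j = ⟪f, Φ (x j)⟫ := fun j => hrepr f (x j) (hxΩ j)
  set g : Fin d → ℝ := A *ᵥ fX with hg
  set hv : H := ∑ i, g i • Φ (x i) with hhv
  have hinner_hv : ∀ w : H, ⟪hv, w⟫ = ∑ i, g i * ⟪Φ (x i), w⟫ := by
    intro w
    rw [hhv, sum_inner]
    exact Finset.sum_congr rfl fun i _ => real_inner_smul_left _ _ _
  -- quadratic form identity
  have hquad : ∀ vv : Fin d → ℝ,
      ⟪(∑ i, vv i • Φ (x i) : H), (∑ i, vv i • Φ (x i) : H)⟫ = vv ⬝ᵥ (K *ᵥ vv) := by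
    intro vv
    rw [sum_inner]
    have h1 : ∀ i, ⟪vv i • Φ (x i), (∑ j, vv j • Φ (x j) : H)⟫
        = vv i * ∑ j, K i j * vv j := by
      intro i
      rw [real_inner_smul_left, inner_sum]
      congr 1
      refine Finset.sum_congr rfl fun j _ => ?_
      rw [real_inner_smul_right]
      simp only [hK, kerMatrix, Matrix.of_apply]
      ring
    simp only [h1]
    simp [dotProduct, Matrix.mulVec]
  have hBg : B *ᵥ g = fX := by
    rw [hg, Matrix.mulVec_mulVec, hBA, Matrix.one_mulVec]
  have hexpand : ∀ vv : Fin d → ℝ, vv ⬝ᵥ (B *ᵥ vv) = vv ⬝ᵥ (K *ᵥ vv) + lam * (vv ⬝ᵥ vv) := by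
    intro vv
    rw [hB, Matrix.add_mulVec, dotProduct_add, Matrix.smul_mulVec,
      Matrix.one_mulVec, dotProduct_smul, smul_eq_mul]
  -- (F4) ‖hv‖ ≤ ‖f‖
  have hhv_le : ‖hv‖ ≤ ‖f‖ := by
    have e0 : ⟪hv, hv⟫ = g ⬝ᵥ (K *ᵥ g) := hquad g
    have e1 : g ⬝ᵥ fX = g ⬝ᵥ (K *ᵥ g) + lam * (g ⬝ᵥ g) := by
      rw [← hBg]; exact hexpand g
    have e2 : ⟪hv, f⟫ = g ⬝ᵥ fX := by
      rw [hinner_hv f, hdot]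
      refine Finset.sum_congr rfl fun i _ => ?_
      rw [hfXval i, real_inner_comm]
    have e3 : ⟪hv, f⟫ ≤ ‖hv‖ * ‖f‖ := real_inner_le_norm hv f
    have e4 : 0 ≤ g ⬝ᵥ g := by
      rw [hdot]; exact Finset.sum_nonneg fun i _ => mul_self_nonneg _
    have e5 : ⟪hv, hv⟫ = ‖hv‖ ^ 2 := real_inner_self_eq_norm_sq hv
    by_contra hcon
    push_neg at hcon
    nlinarith [norm_nonneg f, norm_nonneg hv]
  have hΦnorm : ∀ y ∈ Ω, ‖Φ y‖ ≤ Real.sqrt Mk := by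
    intro y hy
    refine Real.le_sqrt_of_sq_le ?_
    calc ‖Φ y‖ ^ 2 = ⟪Φ y, Φ y⟫ := (real_inner_self_eq_norm_sq _).symm
      _ ≤ |⟪Φ y, Φ y⟫| := le_abs_self _
      _ ≤ Mk := hMk y hy y hy
  -- (F5) ℓ¹ bound on u = A *ᵥ kerVec z
  have hu_bound : ∀ z ∈ Ω,
      ∑ j, |(A *ᵥ kerVec Φ d x z) j| ≤ Real.sqrt Mk * Real.sqrt ((d : ℝ) / lam) := by
    intro z hz
    set w := kerVec Φ d x z with hw
    set u := A *ᵥ w with hu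
    set p : H := ∑ i, u i • Φ (x i) with hp
    have hBu : B *ᵥ u = w := by rw [hu, Matrix.mulVec_mulVec, hBA, Matrix.one_mulVec]
    have e1 : u ⬝ᵥ w = ⟪p, p⟫ + lam * (u ⬝ᵥ u) := by
      rw [← hBu, hexpand u, hquad u]
    have e2 : u ⬝ᵥ w = ⟪p, Φ z⟫ := by
      rw [hdot, hp, sum_inner]
      refine Finset.sum_congr rfl fun i _ => ?_
      rw [real_inner_smul_left, hw]
      rfl
    have e3 : ⟪p, Φ z⟫ ≤ ‖p‖ * Real.sqrt Mk :=
      (real_inner_le_norm p _).trans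
        (mul_le_mul_of_nonneg_left (hΦnorm z hz) (norm_nonneg p))
    have e5 : ⟪p, p⟫ = ‖p‖ ^ 2 := real_inner_self_eq_norm_sq p
    have hUnn : 0 ≤ u ⬝ᵥ u := by
      rw [hdot]; exact Finset.sum_nonneg fun i _ => mul_self_nonneg _
    have hU : lam * (u ⬝ᵥ u) ≤ Mk := by
      nlinarith [sq_nonneg (‖p‖ - Real.sqrt Mk), Real.sq_sqrt hMk0, norm_nonneg p,
        Real.sqrt_nonneg Mk]
    have hU' : u ⬝ᵥ u ≤ Mk / lam := by
      rw [le_div_iff₀ hlam]; linarith [hU]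
    have hCS : (∑ j, |u j|) ^ 2 ≤ (d : ℝ) * ∑ j, |u j| ^ 2 := by
      have := sq_sum_le_card_mul_sum_sq (s := (Finset.univ : Finset (Fin d)))
        (f := fun j => |u j|)
      simpa using this
    have hsum_sq : ∑ j, |u j| ^ 2 = u ⬝ᵥ u := by
      rw [hdot]
      exact Finset.sum_congr rfl fun j _ => by rw [sq_abs, sq]
    rw [← Real.sqrt_mul hMk0]
    refine Real.le_sqrt_of_sq_le ?_
    calc (∑ j, |u j|) ^ 2 ≤ (d : ℝ) * ∑ j, |u j| ^ 2 := hCS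
      _ = (d : ℝ) * (u ⬝ᵥ u) := by rw [hsum_sq]
      _ ≤ (d : ℝ) * (Mk / lam) := by
          exact mul_le_mul_of_nonneg_left hU' (Nat.cast_nonneg d)
      _ = Mk * ((d : ℝ) / lam) := by ring
  -- integrability on Ω
  have hIntInner : ∀ (w : H) (j : Fin d),
      Integrable (fun y => ⟪w, Φ y⟫) ((ρ (x j)).restrict Ω) := by
    intro w j
    have hcont : ContinuousOn (fun y => ⟪w, Φ y⟫) Ω :=
      (innerSL ℝ w).continuous.comp_continuousOn hΦcont
    refine Integrable.mono' (integrable_const (‖w‖ * Real.sqrt Mk))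
      (hcont.aemeasurable hΩmeas).aestronglyMeasurable ?_
    filter_upwards [ae_restrict_mem hΩmeas] with y hy
    rw [Real.norm_eq_abs]
    calc |⟪w, Φ y⟫| ≤ ‖w‖ * ‖Φ y‖ := abs_real_inner_le_norm _ _
      _ ≤ ‖w‖ * Real.sqrt Mk := mul_le_mul_of_nonneg_left (hΦnorm y hy) (norm_nonneg w)
  -- column identities
  have hcolE : ∀ j, (g ᵥ* EX) j = ∫ y in Ω, ⟪hv, Φ y⟫ ∂(ρ (x j)) := by
    intro j
    have h1 : (g ᵥ* EX) j = ∑ i, g i * ∫ y in Ω, ⟪Φ (x i), Φ y⟫ ∂(ρ (x j)) := by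
      simp [Matrix.vecMul, dotProduct, hEX, propMatrix]
    rw [h1]
    calc ∑ i, g i * ∫ y in Ω, ⟪Φ (x i), Φ y⟫ ∂(ρ (x j))
        = ∑ i, ∫ y in Ω, g i * ⟪Φ (x i), Φ y⟫ ∂(ρ (x j)) :=
          Finset.sum_congr rfl fun i _ => (integral_const_mul _ _).symm
      _ = ∫ y in Ω, ∑ i, g i * ⟪Φ (x i), Φ y⟫ ∂(ρ (x j)) :=
          (integral_finset_sum Finset.univ
            (fun i _ => (hIntInner (Φ (x i)) j).const_mul (g i))).symm
      _ = ∫ y in Ω, ⟪hv, Φ y⟫ ∂(ρ (x j)) := by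
          refine integral_congr_ae (Filter.Eventually.of_forall fun y => ?_)
          exact (hinner_hv (Φ y)).symm
  have hcolMC : ∀ (j : Fin d) (θ : Θ),
      (g ᵥ* MC θ) j = (1 / (m : ℝ)) * ∑ l : Fin m, ⟪hv, Φ (Y (l, j) θ)⟫ := by
    intro j θ
    have h1 : (g ᵥ* MC θ) j
        = ∑ i, g i * ((1 / (m : ℝ)) * ∑ l : Fin m, ⟪Φ (x i), Φ (Y (l, j) θ)⟫) := by
      simp [Matrix.vecMul, dotProduct, hMC, propMatrixMC]
    rw [h1]
    simp only [hinner_hv, Finset.mul_sum]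
    rw [Finset.sum_comm]
    refine Finset.sum_congr rfl fun l _ => Finset.sum_congr rfl fun i _ => by ring
  -- the key deterministic identity
  have hident : ∀ (θ : Θ) (z : EuclideanSpace ℝ (Fin n)),
      fX ⬝ᵥ (A *ᵥ (MC θ *ᵥ (A *ᵥ kerVec Φ d x z))) -
        fX ⬝ᵥ (A *ᵥ (EX *ᵥ (A *ᵥ kerVec Φ d x z)))
      = ∑ j, ((g ᵥ* MC θ) j - (g ᵥ* EX) j) * (A *ᵥ kerVec Φ d x z) j := by
    intro θ z
    have h1 : ∀ N : Matrix (Fin d) (Fin d) ℝ,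
        fX ⬝ᵥ (A *ᵥ (N *ᵥ (A *ᵥ kerVec Φ d x z)))
        = ∑ j, (g ᵥ* N) j * (A *ᵥ kerVec Φ d x z) j := by
      intro N
      rw [dotProduct_mulVec]
      have h2 : fX ᵥ* A = g := by
        rw [← Matrix.mulVec_transpose, hAT, ← hg]
      rw [h2, dotProduct_mulVec, hdot]
    rw [h1, h1, ← Finset.sum_sub_distrib]
    exact Finset.sum_congr rfl fun j _ => by ring
  -- the indicator function and samples
  set F : EuclideanSpace ℝ (Fin n) → ℝ := Ω.indicator (fun y => ⟪hv, Φ y⟫) with hF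
  have hFmeas : Measurable F := by
    have hpw : F = Ω.piecewise (fun y => ⟪hv, Φ y⟫) (fun _ => 0) := by
      ext y; by_cases hy : y ∈ Ω <;> simp [hF, Set.indicator, Set.piecewise, hy]
    rw [hpw]
    exact ContinuousOn.measurable_piecewise
      ((innerSL ℝ hv).continuous.comp_continuousOn hΦcont) continuousOn_const hΩmeas
  set c : ℝ := ‖hv‖ * Real.sqrt Mk with hcdef
  have hc0 : 0 ≤ c := by positivity
  have hFbdd : ∀ y, |F y| ≤ c := by
    intro y
    by_cases hy : y ∈ Ω
    · rw [hF, Set.indicator_of_mem hy]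
      calc |⟪hv, Φ y⟫| ≤ ‖hv‖ * ‖Φ y‖ := abs_real_inner_le_norm _ _
        _ ≤ c := mul_le_mul_of_nonneg_left (hΦnorm y hy) (norm_nonneg _)
    · rw [hF, Set.indicator_of_notMem hy]
      simpa using hc0
  set μcol : Fin d → ℝ := fun j => ∫ y in Ω, ⟪hv, Φ y⟫ ∂(ρ (x j)) with hμcol
  set Z : Fin m × Fin d → Θ → ℝ := fun p θ => F (Y p θ) with hZ
  have hZmeas : ∀ p, Measurable (Z p) := fun p => hFmeas.comp (hYmeas p)
  have hZint : ∀ p, Integrable (Z p) P := by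
    intro p
    refine Integrable.mono' (integrable_const c) (hZmeas p).aestronglyMeasurable ?_
    exact Filter.Eventually.of_forall fun θ => by
      rw [Real.norm_eq_abs]; exact hFbdd _
  have hZmean : ∀ (l : Fin m) (j : Fin d), ∫ θ, Z (l, j) θ ∂P = μcol j := by
    intro l j
    calc ∫ θ, Z (l, j) θ ∂P = ∫ y, F y ∂(Measure.map (Y (l, j)) P) :=
          (integral_map (hYmeas (l, j)).aemeasurable hFmeas.aestronglyMeasurable).symm
      _ = ∫ y, F y ∂(ρ (x j)) := by rw [hYlaw l j]
      _ = μcol j := by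
          rw [hF, integral_indicator hΩmeas]
  set W : Fin m × Fin d → Θ → ℝ := fun p θ => Z p θ - μcol p.2 with hW
  have hWmeas : ∀ p, Measurable (W p) := fun p => (hZmeas p).sub measurable_const
  have hWindep : iIndepFun W P :=
    hYindep.comp (fun p => fun y => F y - μcol p.2)
      (fun p => hFmeas.sub measurable_const)
  have hWmean : ∀ (l : Fin m) (j : Fin d), ∫ θ, W (l, j) θ ∂P = 0 := by
    intro l j
    rw [hW]
    simp only
    rw [integral_sub (hZint (l, j)) (integrable_const _), hZmean l j, integral_const]
    simp
  have hWbdd : ∀ p θ, W p θ ∈ Set.Icc (-c - μcol p.2) ((-c - μcol p.2) + 2 * c) := by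
    intro p θ
    have h1 := hFbdd (Y p θ)
    rw [abs_le] at h1
    constructor
    · simp only [hW, hZ]; linarith [h1.1]
    · simp only [hW, hZ]; linarith [h1.2]
  -- the a.s. good set
  set G : Set Θ := ⋂ p, (Y p) ⁻¹' Ω with hG
  have hGmeas : MeasurableSet G := MeasurableSet.iInter fun p => (hYmeas p) hΩmeas
  have hGone : P G = 1 := by
    rw [← prob_compl_eq_zero_iff hGmeas, hG, Set.compl_iInter]
    refine measure_iUnion_null fun p => ?_
    rw [measure_compl ((hYmeas p) hΩmeas) (measure_ne_top P _)]
    have h1 : P ((Y p) ⁻¹' Ω) = 1 := by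
      obtain ⟨l, j⟩ := p
      calc P ((Y (l, j)) ⁻¹' Ω) = (Measure.map (Y (l, j)) P) Ω :=
            (Measure.map_apply (hYmeas (l, j)) hΩmeas).symm
        _ = ρ (x j) Ω := by rw [hYlaw l j]
        _ = 1 := hρΩ (x j) (hxΩ j)
    rw [h1]
    simp
  have hGmem : ∀ θ ∈ G, ∀ p, Y p θ ∈ Ω := by
    intro θ hθ p
    rw [hG] at hθ
    exact Set.mem_iInter.1 hθ p
  have hZval : ∀ θ ∈ G, ∀ p, Z p θ = ⟪hv, Φ (Y p θ)⟫ := by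
    intro θ hθ p
    rw [hZ]
    exact Set.indicator_of_mem (hGmem θ hθ p) _
  -- the column deviation equals the average of W
  have hΔeq : ∀ θ ∈ G, ∀ j, (g ᵥ* MC θ) j - (g ᵥ* EX) j
      = (1 / (m : ℝ)) * ∑ l : Fin m, W (l, j) θ := by
    intro θ hθ j
    have hm0 : (m : ℝ) ≠ 0 := Nat.cast_ne_zero.2 (by omega)
    have h1 : ∑ l : Fin m, W (l, j) θ
        = (∑ l : Fin m, ⟪hv, Φ (Y (l, j) θ)⟫) - (m : ℝ) * μcol j := by
      rw [hW]
      simp only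
      rw [Finset.sum_sub_distrib, Finset.sum_const, Finset.card_univ, Fintype.card_fin,
        nsmul_eq_mul]
      congr 1
      exact Finset.sum_congr rfl fun l _ => hZval θ hθ (l, j)
    have hμcolj : μcol j = ∫ y in Ω, ⟪hv, Φ y⟫ ∂(ρ (x j)) := rfl
    rw [hcolMC, hcolE, h1, ← hμcolj]
    field_simp
  -- the event-to-target implication
  have hsub_core : ∀ θ ∈ G, (∀ j, |(g ᵥ* MC θ) j - (g ᵥ* EX) j| ≤ ε * ‖hv‖) →
      ∀ z ∈ Ω, |fX ⬝ᵥ (A *ᵥ (MC θ *ᵥ (A *ᵥ kerVec Φ d x z))) -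
        fX ⬝ᵥ (A *ᵥ (EX *ᵥ (A *ᵥ kerVec Φ d x z)))| ≤
        ε * Real.sqrt Mk * Real.sqrt ((d : ℝ) / lam) * ‖f‖ := by
    intro θ hθ hΔ z hz
    rw [hident θ z]
    calc |∑ j, ((g ᵥ* MC θ) j - (g ᵥ* EX) j) * (A *ᵥ kerVec Φ d x z) j|
        ≤ ∑ j, |((g ᵥ* MC θ) j - (g ᵥ* EX) j) * (A *ᵥ kerVec Φ d x z) j| :=
          Finset.abs_sum_le_sum_abs _ _
      _ = ∑ j, |(g ᵥ* MC θ) j - (g ᵥ* EX) j| * |(A *ᵥ kerVec Φ d x z) j| := by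
          simp [abs_mul]
      _ ≤ ∑ j, (ε * ‖hv‖) * |(A *ᵥ kerVec Φ d x z) j| :=
          Finset.sum_le_sum fun j _ =>
            mul_le_mul_of_nonneg_right (hΔ j) (abs_nonneg _)
      _ = (ε * ‖hv‖) * ∑ j, |(A *ᵥ kerVec Φ d x z) j| := by rw [Finset.mul_sum]
      _ ≤ (ε * ‖hv‖) * (Real.sqrt Mk * Real.sqrt ((d : ℝ) / lam)) :=
          mul_le_mul_of_nonneg_left (hu_bound z hz) (by positivity)
      _ ≤ ε * Real.sqrt Mk * Real.sqrt ((d : ℝ) / lam) * ‖f‖ := by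
          nlinarith [mul_le_mul_of_nonneg_left hhv_le
            (mul_nonneg hε.le (mul_nonneg (Real.sqrt_nonneg Mk)
              (Real.sqrt_nonneg ((d : ℝ) / lam))))]
  rcases eq_or_lt_of_le hc0 with hcz | hcpos
  · -- degenerate case c = 0
    have hzero : ∀ y ∈ Ω, ⟪hv, Φ y⟫ = 0 := by
      intro y hy
      have := hFbdd y
      rw [hF, Set.indicator_of_mem hy, ← hcz] at this
      exact abs_eq_zero.1 (le_antisymm this (abs_nonneg _))
    have hμ0 : ∀ j, μcol j = 0 := by
      intro j
      rw [hμcol]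
      simp only
      refine integral_eq_zero_of_ae ?_
      filter_upwards [ae_restrict_mem hΩmeas] with y hy
      simp [hzero y hy]
    have hΔ0 : ∀ θ ∈ G, ∀ j, |(g ᵥ* MC θ) j - (g ᵥ* EX) j| ≤ ε * ‖hv‖ := by
      intro θ hθ j
      rw [hΔeq θ hθ j]
      have hW0 : ∀ l : Fin m, W (l, j) θ = 0 := by
        intro l
        rw [hW]
        simp only
        rw [hZval θ hθ (l, j), hzero _ (hGmem θ hθ (l, j)), hμ0 j]
        ring
      simp only [hW0, Finset.sum_const_zero, mul_zero, abs_zero]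
      positivity
    have hGsub : G ⊆ {θ : Θ | ∀ z ∈ Ω,
        |fX ⬝ᵥ (A *ᵥ (MC θ *ᵥ (A *ᵥ kerVec Φ d x z))) -
          fX ⬝ᵥ (A *ᵥ (EX *ᵥ (A *ᵥ kerVec Φ d x z)))| ≤
          ε * Real.sqrt Mk * Real.sqrt ((d : ℝ) / lam) * ‖f‖} :=
      fun θ hθ => hsub_core θ hθ (hΔ0 θ hθ)
    calc ENNReal.ofReal (1 - 2 * d * Real.exp (-(m : ℝ) * ε ^ 2 / (2 * Mk)))
        ≤ 1 := ENNReal.ofReal_le_one.2 (by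
          have : 0 ≤ 2 * (d : ℝ) * Real.exp (-(m : ℝ) * ε ^ 2 / (2 * Mk)) := by positivity
          linarith)
      _ = P G := hGone.symm
      _ ≤ _ := measure_mono hGsub
  · -- main case c > 0
    have hhv_pos : 0 < ‖hv‖ := by
      rcases (norm_nonneg hv).eq_or_lt with h | h
      · exfalso; rw [hcdef, ← h] at hcpos; simp at hcpos
      · exact h
    have hsqrtMk_pos : 0 < Real.sqrt Mk := by
      rcases (Real.sqrt_nonneg Mk).eq_or_lt with h | h
      · exfalso; rw [hcdef, ← h] at hcpos; simp at hcpos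
      · exact h
    have hMk_pos : 0 < Mk := Real.sqrt_pos.1 hsqrtMk_pos
    set t : ℝ := ε * ‖hv‖ with ht
    have ht0 : 0 ≤ t := by positivity
    set e : ℝ := Real.exp (-(m : ℝ) * ε ^ 2 / (2 * Mk)) with he
    have he0 : 0 < e := Real.exp_pos _
    -- per-column embedding
    have hcol_bound : ∀ (j : Fin d) (Wf : Fin m × Fin d → Θ → ℝ),
        iIndepFun Wf P → (∀ p, Measurable (Wf p)) →
        (∀ p, ∃ a : ℝ, ∀ θ, Wf p θ ∈ Set.Icc a (a + 2 * c)) →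
        (∀ l : Fin m, ∫ θ, Wf (l, j) θ ∂P = 0) →
        P {θ | (m : ℝ) * t ≤ ∑ l : Fin m, Wf (l, j) θ} ≤ ENNReal.ofReal e := by
      intro j Wf hWfindep hWfmeas hWfIcc hWfmean
      set emb : Fin m ↪ Fin m × Fin d :=
        ⟨fun l => (l, j), fun a b hab => by simpa using congrArg Prod.fst hab⟩ with hemb
      set s : Finset (Fin m × Fin d) := Finset.univ.map emb with hs
      have hcard : (s.card : ℝ) = (m : ℝ) := by
        rw [hs, Finset.card_map, Finset.card_univ, Fintype.card_fin]
      have hsum : ∀ θ, ∑ i ∈ s, Wf i θ = ∑ l : Fin m, Wf (l, j) θ := by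
        intro θ
        rw [hs, Finset.sum_map]
        rfl
      have hchern := chernoff_sum Wf hWfindep hWfmeas s c t hcpos ht0
        (fun i _ => by
          obtain ⟨a, ha⟩ := hWfIcc i
          exact ⟨a, Filter.Eventually.of_forall ha⟩)
        (fun i hi => by
          rw [hs, Finset.mem_map] at hi
          obtain ⟨l, _, rfl⟩ := hi
          exact hWfmean l)
      have hset : {θ | (m : ℝ) * t ≤ ∑ l : Fin m, Wf (l, j) θ}
          = {θ | (s.card : ℝ) * t ≤ ∑ i ∈ s, Wf i θ} := by
        ext θ
        rw [Set.mem_setOf_eq, Set.mem_setOf_eq, hcard, hsum]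
      rw [hset]
      refine hchern.trans (le_of_eq ?_)
      congr 1
      rw [hcard, he]
      congr 1
      have hc2 : c ^ 2 = ‖hv‖ ^ 2 * Mk := by
        rw [hcdef, mul_pow, Real.sq_sqrt hMk0]
      rw [ht, hc2]
      have h1 : (‖hv‖ : ℝ) ≠ 0 := ne_of_gt hhv_pos
      have h2 : Mk ≠ 0 := ne_of_gt hMk_pos
      field_simp
    -- event sets
    set Sp : Fin d → Set Θ := fun j => {θ | (m : ℝ) * t ≤ ∑ l : Fin m, W (l, j) θ} with hSp
    set Sm : Fin d → Set Θ := fun j => {θ | (m : ℝ) * t ≤ ∑ l : Fin m, -(W (l, j) θ)} with hSm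
    have hSp_bound : ∀ j, P (Sp j) ≤ ENNReal.ofReal e := fun j =>
      hcol_bound j W hWindep hWmeas
        (fun p => ⟨-c - μcol p.2, fun θ => hWbdd p θ⟩) (fun l => hWmean l j)
    have hSm_bound : ∀ j, P (Sm j) ≤ ENNReal.ofReal e := by
      intro j
      have hnindep : iIndepFun (fun p => fun θ => -(W p θ)) P :=
        hWindep.comp (fun _ => fun r => -r) (fun _ => measurable_neg)
      refine hcol_bound j (fun p θ => -(W p θ)) hnindep (fun p => (hWmeas p).neg)
        (fun p => ⟨μcol p.2 - c, fun θ => ?_⟩)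
        (fun l => by rw [integral_neg, hWmean l j, neg_zero])
      have h1 := hWbdd p θ
      obtain ⟨ha, hb⟩ := h1
      constructor
      · linarith
      · linarith
    set S : Set Θ := G ∩ ⋂ j, ((Sp j)ᶜ ∩ (Sm j)ᶜ) with hS
    have hSpmeas : ∀ j, MeasurableSet (Sp j) := fun j =>
      measurableSet_le measurable_const (Finset.measurable_sum _ (fun l _ => hWmeas (l, j)))
    have hSmmeas : ∀ j, MeasurableSet (Sm j) := fun j =>
      measurableSet_le measurable_const (Finset.measurable_sum _ (fun l _ => (hWmeas (l, j)).neg))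
    have hSmeas : MeasurableSet S :=
      hGmeas.inter (MeasurableSet.iInter fun j => (hSpmeas j).compl.inter (hSmmeas j).compl)
    have hScompl : P Sᶜ ≤ ENNReal.ofReal (2 * d * e) := by
      have hGc : P Gᶜ = 0 := by rw [prob_compl_eq_zero_iff hGmeas]; exact hGone
      have hrewrite : Sᶜ = Gᶜ ∪ ⋃ j, (Sp j ∪ Sm j) := by
        rw [hS, Set.compl_inter]
        congr 1
        rw [Set.compl_iInter]
        refine Set.iUnion_congr fun j => ?_
        rw [Set.compl_inter, compl_compl, compl_compl]
      rw [hrewrite]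
      calc P (Gᶜ ∪ ⋃ j, (Sp j ∪ Sm j)) ≤ P Gᶜ + P (⋃ j, (Sp j ∪ Sm j)) :=
            measure_union_le _ _
        _ = P (⋃ j, (Sp j ∪ Sm j)) := by rw [hGc, zero_add]
        _ ≤ ∑ j, P (Sp j ∪ Sm j) := measure_iUnion_fintype_le _ _
        _ ≤ ∑ _j : Fin d, (ENNReal.ofReal e + ENNReal.ofReal e) :=
            Finset.sum_le_sum fun j _ =>
              (measure_union_le _ _).trans (add_le_add (hSp_bound j) (hSm_bound j))
        _ = (d : ENNReal) * (ENNReal.ofReal e + ENNReal.ofReal e) := by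
            rw [Finset.sum_const, Finset.card_univ, Fintype.card_fin, nsmul_eq_mul]
        _ = ENNReal.ofReal (2 * d * e) := by
            rw [← ENNReal.ofReal_add he0.le he0.le, ← ENNReal.ofReal_natCast d,
              ← ENNReal.ofReal_mul (Nat.cast_nonneg d)]
            congr 1
            ring
    have hsubS : S ⊆ {θ : Θ | ∀ z ∈ Ω,
        |fX ⬝ᵥ (A *ᵥ (MC θ *ᵥ (A *ᵥ kerVec Φ d x z))) -
          fX ⬝ᵥ (A *ᵥ (EX *ᵥ (A *ᵥ kerVec Φ d x z)))| ≤
          ε * Real.sqrt Mk * Real.sqrt ((d : ℝ) / lam) * ‖f‖} := by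
      intro θ hθ
      obtain ⟨hθG, hθE⟩ := hθ
      refine hsub_core θ hθG ?_
      intro j
      obtain ⟨hp, hmn⟩ := Set.mem_iInter.1 hθE j
      rw [hΔeq θ hθG j]
      have hm0 : (0 : ℝ) < (m : ℝ) := by exact_mod_cast hm
      have h1 : ∑ l : Fin m, W (l, j) θ < (m : ℝ) * t := lt_of_not_ge (fun hcon => hp hcon)
      have h2 : -(∑ l : Fin m, W (l, j) θ) < (m : ℝ) * t := by
        have h3 : ∑ l : Fin m, -(W (l, j) θ) < (m : ℝ) * t :=
          lt_of_not_ge (fun hcon => hmn hcon)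
        rw [Finset.sum_neg_distrib] at h3
        exact h3
      have habs : |∑ l : Fin m, W (l, j) θ| ≤ (m : ℝ) * t :=
        abs_le.2 ⟨by linarith, h1.le⟩
      rw [abs_mul, abs_of_pos (by positivity : (0 : ℝ) < 1 / (m : ℝ))]
      calc (1 / (m : ℝ)) * |∑ l : Fin m, W (l, j) θ|
          ≤ (1 / (m : ℝ)) * ((m : ℝ) * t) :=
            mul_le_mul_of_nonneg_left habs (by positivity)
        _ = t := by field_simp
    calc ENNReal.ofReal (1 - 2 * d * e) = 1 - ENNReal.ofReal (2 * d * e) := by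
          rw [ENNReal.ofReal_sub _ (by positivity), ENNReal.ofReal_one]
      _ ≤ 1 - P Sᶜ := tsub_le_tsub_left hScompl 1
      _ = P S := by
          rw [prob_compl_eq_one_sub hSmeas,
            ENNReal.sub_sub_cancel ENNReal.one_ne_top prob_le_one]
      _ ≤ _ := measure_mono hsubS

end
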